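/- Let p be a prime number and let (M_i, f_i : M_{i+1} → M_i)_{i∈ℕ} be a projective system of ℤ_p-modules such that every M_i is torsion with finite exponent, i.e., for each i there exists e_i ∈ ℕ with p^{e_i}·M_i = 0. Then lim¹ M_i, defined as the cokernel of the homomorphism d : ∏_{i∈ℕ} M_i → ∏_{i∈ℕ} M_i sending (m_i)_i to (m_i − f_i(m_{i+1}))_i, is a weakly p-complete ℤ_p-module. -/
import Mathlib


/-- A `ℤ_p`-module `N` is weakly `p`-complete (derived `p`-complete) if the only
`p`-divisible sequence in `N` is zero and the map `(n_i)_i ↦ (n_i - p • n_{i+1})_i` on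
`∏_{i ∈ ℕ} N` is surjective. -/
def IsWeaklyPComplete (p : ℕ) [Fact p.Prime] (N : Type*) [AddCommGroup N]
    [Module ℤ_[p] N] : Prop :=
  (∀ m : ℕ → N, (∀ i, m i = (p : ℤ_[p]) • m (i + 1)) → ∀ i, m i = 0) ∧
  Function.Surjective (fun m : ℕ → N => fun i => m i - (p : ℤ_[p]) • m (i + 1))

theorem aux_solve {p : ℕ} [Fact p.Prime] {N : Type*} [AddCommGroup N] [Module ℤ_[p] N]
    (e : ℕ) (he : ∀ x : N, ((p : ℤ_[p]) ^ e) • x = 0) (t : ℕ → N) (j : ℕ) :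
    (∑ k ∈ Finset.range e, ((p : ℤ_[p]) ^ k) • t (j + k)) -
      (p : ℤ_[p]) • (∑ k ∈ Finset.range e, ((p : ℤ_[p]) ^ k) • t (j + 1 + k)) = t j := by
  have h1 : (p : ℤ_[p]) • (∑ k ∈ Finset.range e, ((p : ℤ_[p]) ^ k) • t (j + 1 + k))
      = ∑ k ∈ Finset.range e, ((p : ℤ_[p]) ^ (k + 1)) • t (j + (k + 1)) := by
    rw [Finset.smul_sum]
    refine Finset.sum_congr rfl fun k _ => ?_
    rw [smul_smul, ← pow_succ']
    congr 2
    omega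
  rw [h1]
  have h2 := Finset.sum_range_succ' (fun k => ((p : ℤ_[p]) ^ k) • t (j + k)) e
  have h3 := Finset.sum_range_succ (fun k => ((p : ℤ_[p]) ^ k) • t (j + k)) e
  simp only [he, pow_zero, one_smul, Nat.add_zero, add_zero] at h2 h3
  rw [h3] at h2
  rw [h2]
  abel

/-- If `(M i, f i)` is a projective system of `ℤ_p`-modules which are all torsion with
finite exponent, then `lim¹ M`, the cokernel of `d : ∏ M i → ∏ M i`,
`d m i = m i - f i (m (i+1))`, is a weakly `p`-complete `ℤ_p`-module. -/
theorem stmt_6 (p : ℕ) [Fact p.Prime] (M : ℕ → Type*)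
    [∀ i, AddCommGroup (M i)] [∀ i, Module ℤ_[p] (M i)]
    (f : ∀ i, M (i + 1) →ₗ[ℤ_[p]] M i)
    (hexp : ∀ i, ∃ e : ℕ, ∀ x : M i, ((p : ℤ_[p]) ^ e) • x = 0)
    (d : (∀ i, M i) →ₗ[ℤ_[p]] (∀ i, M i))
    (hd : ∀ (m : ∀ i, M i) (i : ℕ), d m i = m i - f i (m (i + 1))) :
    IsWeaklyPComplete p ((∀ i, M i) ⧸ LinearMap.range d) := by
  choose e he using hexp
  -- Condition (B) for the product `P = ∀ i, M i`.
  have hBP : ∀ t : ℕ → (∀ i, M i), ∃ n : ℕ → (∀ i, M i),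
      ∀ j, n j - (p : ℤ_[p]) • n (j + 1) = t j := by
    intro t
    refine ⟨fun j i => ∑ k ∈ Finset.range (e i), ((p : ℤ_[p]) ^ k) • t (j + k) i, fun j => ?_⟩
    funext i
    exact aux_solve (e i) (he i) (fun j => t j i) j
  -- Condition (A) for the product.
  have hAP : ∀ m : ℕ → (∀ i, M i), (∀ j, m j = (p : ℤ_[p]) • m (j + 1)) → ∀ j, m j = 0 := by
    intro m hm j
    funext i
    have key : ∀ k, m j i = ((p : ℤ_[p]) ^ k) • m (j + k) i := by
      intro k
      induction k with
      | zero => simp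
      | succ k ih =>
        rw [ih, hm (j + k), Pi.smul_apply, smul_smul, ← pow_succ]
        rfl
    rw [key (e i), he i]
    rfl
  constructor
  · -- (A) for the quotient
    intro m hm
    choose x hx using fun j => Submodule.Quotient.mk_surjective (LinearMap.range d) (m j)
    have hdiff : ∀ j, ∃ a : ∀ i, M i, x j - (p : ℤ_[p]) • x (j + 1) = d a := by
      intro j
      have h0 : (Submodule.Quotient.mk (x j - (p : ℤ_[p]) • x (j + 1)) :
          (∀ i, M i) ⧸ LinearMap.range d) = 0 := by
        rw [Submodule.Quotient.mk_sub, Submodule.Quotient.mk_smul, hx, hx, ← hm j, sub_self]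
      obtain ⟨a, ha⟩ := (Submodule.Quotient.mk_eq_zero _).1 h0
      exact ⟨a, ha.symm⟩
    choose a ha using hdiff
    obtain ⟨b, hb⟩ := hBP a
    have hc : ∀ j, (x j - d (b j)) = (p : ℤ_[p]) • (x (j + 1) - d (b (j + 1))) := by
      intro j
      have heq : x j - d (b j) - (p : ℤ_[p]) • (x (j + 1) - d (b (j + 1)))
          = (x j - (p : ℤ_[p]) • x (j + 1)) - d (b j - (p : ℤ_[p]) • b (j + 1)) := by
        rw [map_sub, map_smul, smul_sub]
        abel
      have h0 : x j - d (b j) - (p : ℤ_[p]) • (x (j + 1) - d (b (j + 1))) = 0 := by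
        rw [heq, hb j, ha j, sub_self]
      exact sub_eq_zero.mp h0
    have hz := hAP (fun j => x j - d (b j)) hc
    intro j
    rw [← hx j]
    exact (Submodule.Quotient.mk_eq_zero _).2 ⟨b j, (sub_eq_zero.mp (hz j)).symm⟩
  · -- (B) for the quotient
    intro t
    choose x hx using fun j => Submodule.Quotient.mk_surjective (LinearMap.range d) (t j)
    obtain ⟨n, hn⟩ := hBP x
    refine ⟨fun j => Submodule.Quotient.mk (n j), ?_⟩
    funext j
    show (Submodule.Quotient.mk (n j) : (∀ i, M i) ⧸ LinearMap.range d)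
        - (p : ℤ_[p]) • Submodule.Quotient.mk (n (j + 1)) = t j
    rw [← Submodule.Quotient.mk_smul, ← Submodule.Quotient.mk_sub, hn j, hx j]
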